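/- Let L ⊆ Σ* and 0 ≤ ε < 1/2. Then L is recognized with error bound ε by some RT-QFA↻ if and only if L is recognized with error bound ε by some RT-PostQFA. In particular, the class of languages recognized by RT-QFA↻s with bounded error equals PostQAL. -/

import Mathlib

noncomputable section

/-- The input alphabet extended with the two endmarkers `¢` and `$`. -/
inductive ESym (α : Type) : Type where
  | cent : ESym α
  | dollar : ESym α
  | letter : α → ESym α

/-- The diagonal 0-1 projection matrix supported on a set of states. -/
def projM {m : ℕ} (S : Finset (Fin m)) : Matrix (Fin m) (Fin m) ℂ :=
  Matrix.diagonal (fun i => if i ∈ S then 1 else 0)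

/-- The density matrix obtained by applying, in order, the Kraus families for
`¢`, the letters of `w`, and `$` to the initial density matrix `|q₁⟩⟨q₁|`. -/
def qRun {α : Type} {n : ℕ} {k : ESym α → ℕ}
    (E : ∀ σ : ESym α, Fin (k σ) → Matrix (Fin (n + 1)) (Fin (n + 1)) ℂ)
    (w : List α) : Matrix (Fin (n + 1)) (Fin (n + 1)) ℂ :=
  (ESym.cent :: (w.map ESym.letter ++ [ESym.dollar])).foldl
    (fun ρ σ => ∑ i : Fin (k σ), E σ i * ρ * (E σ i).conjTranspose)
    (Matrix.single 0 0 1)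

/-- A real-time quantum finite automaton with postselection (RT-PostQFA). -/
structure PostQFA (α : Type) where
  n : ℕ
  k : ESym α → ℕ
  E : ∀ σ : ESym α, Fin (k σ) → Matrix (Fin (n + 1)) (Fin (n + 1)) ℂ
  kraus : ∀ σ : ESym α, ∑ i : Fin (k σ), (E σ i).conjTranspose * E σ i = 1
  Qpa : Finset (Fin (n + 1))
  Qpr : Finset (Fin (n + 1))
  disj : Disjoint Qpa Qpr
  postPos : ∀ w : List α,
    0 < ((projM Qpa * qRun E w).trace).re + ((projM Qpr * qRun E w).trace).re

/-- Acceptance probability before postselection. -/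
def PostQFA.pacc {α : Type} (M : PostQFA α) (w : List α) : ℝ :=
  ((projM M.Qpa * qRun M.E w).trace).re

/-- Rejection probability before postselection. -/
def PostQFA.prej {α : Type} (M : PostQFA α) (w : List α) : ℝ :=
  ((projM M.Qpr * qRun M.E w).trace).re

/-- Normalized acceptance probability of an RT-PostQFA. -/
def PostQFA.fa {α : Type} (M : PostQFA α) (w : List α) : ℝ :=
  M.pacc w / (M.pacc w + M.prej w)

/-- Recognition of a language with error bound `ε`. -/
def PostQFA.Recognizes {α : Type} (M : PostQFA α) (L : Set (List α)) (ε : ℝ) : Prop :=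
  ∀ w : List α, (w ∈ L → 1 - ε ≤ M.fa w) ∧ (w ∉ L → M.fa w ≤ ε)

/-- The class of languages recognized by RT-PostQFAs with bounded error. -/
def PostQAL {α : Type} (L : Set (List α)) : Prop :=
  ∃ (M : PostQFA α) (ε : ℝ), 0 ≤ ε ∧ ε < 1 / 2 ∧ M.Recognizes L ε

/-- Recognition with zero error: `fa = 1` on members, `fa = 0` on non-members. -/
def PostQFA.RecognizesZero {α : Type} (M : PostQFA α) (L : Set (List α)) : Prop :=
  ∀ w : List α, (w ∈ L → M.fa w = 1) ∧ (w ∉ L → M.fa w = 0)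

/-- The class of languages recognized by RT-PostQFAs with zero error. -/
def ZPostQAL {α : Type} (L : Set (List α)) : Prop :=
  ∃ M : PostQFA α, M.RecognizesZero L

/-- A real-time quantum finite automaton with restart (RT-QFA↻),
restarting only at the right end of the input. -/
structure RestartQFA (α : Type) where
  n : ℕ
  k : ESym α → ℕ
  E : ∀ σ : ESym α, Fin (k σ) → Matrix (Fin (n + 1)) (Fin (n + 1)) ℂ
  kraus : ∀ σ : ESym α, ∑ i : Fin (k σ), (E σ i).conjTranspose * E σ i = 1
  Qa : Finset (Fin (n + 1))
  Qr : Finset (Fin (n + 1))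
  disj : Disjoint Qa Qr
  haltPos : ∀ w : List α,
    0 < ((projM Qa * qRun E w).trace).re + ((projM Qr * qRun E w).trace).re

/-- Acceptance probability of a single round. -/
def RestartQFA.pacc {α : Type} (M : RestartQFA α) (w : List α) : ℝ :=
  ((projM M.Qa * qRun M.E w).trace).re

/-- Rejection probability of a single round. -/
def RestartQFA.prej {α : Type} (M : RestartQFA α) (w : List α) : ℝ :=
  ((projM M.Qr * qRun M.E w).trace).re

/-- Overall acceptance probability of an RT-QFA↻: the sum over the number of
restarts of the probability of restarting that many times and then accepting. -/
def RestartQFA.fa {α : Type} (M : RestartQFA α) (w : List α) : ℝ :=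
  ∑' i : ℕ, (1 - M.pacc w - M.prej w) ^ i * M.pacc w

/-- Recognition of a language with error bound `ε`. -/
def RestartQFA.Recognizes {α : Type} (M : RestartQFA α) (L : Set (List α)) (ε : ℝ) : Prop :=
  ∀ w : List α, (w ∈ L → 1 - ε ≤ M.fa w) ∧ (w ∉ L → M.fa w ≤ ε)

/-- The class of languages recognized by RT-QFA↻s with bounded error. -/
def RestartQAL {α : Type} (L : Set (List α)) : Prop :=
  ∃ (M : RestartQFA α) (ε : ℝ), 0 ≤ ε ∧ ε < 1 / 2 ∧ M.Recognizes L ε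

section Aux
open scoped ComplexOrder

lemma step_psd_trace {n : ℕ} {m : ℕ} (E : Fin m → Matrix (Fin (n+1)) (Fin (n+1)) ℂ)
    (hk : ∑ i : Fin m, (E i).conjTranspose * E i = 1)
    (ρ : Matrix (Fin (n+1)) (Fin (n+1)) ℂ) (hρ : ρ.PosSemidef) :
    (∑ i : Fin m, E i * ρ * (E i).conjTranspose).PosSemidef ∧
      (∑ i : Fin m, E i * ρ * (E i).conjTranspose).trace = ρ.trace := by
  constructor
  · exact Finset.sum_induction (fun i => E i * ρ * (E i).conjTranspose)
      (fun A => A.PosSemidef) (fun a b ha hb => ha.add hb) Matrix.PosSemidef.zero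
      (fun i _ => hρ.mul_mul_conjTranspose_same (E i))
  · rw [Matrix.trace_sum]
    calc ∑ i : Fin m, (E i * ρ * (E i).conjTranspose).trace
        = ∑ i : Fin m, ((E i).conjTranspose * E i * ρ).trace :=
          Finset.sum_congr rfl fun i _ => Matrix.trace_mul_cycle (E i) ρ _
      _ = (∑ i : Fin m, (E i).conjTranspose * E i * ρ).trace := by rw [Matrix.trace_sum]
      _ = ((∑ i : Fin m, (E i).conjTranspose * E i) * ρ).trace := by rw [Finset.sum_mul]
      _ = ρ.trace := by rw [hk, Matrix.one_mul]

lemma foldl_psd_trace {α : Type} {n : ℕ} {k : ESym α → ℕ}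
    (E : ∀ σ : ESym α, Fin (k σ) → Matrix (Fin (n+1)) (Fin (n+1)) ℂ)
    (hk : ∀ σ : ESym α, ∑ i : Fin (k σ), (E σ i).conjTranspose * E σ i = 1)
    (l : List (ESym α)) :
    ∀ ρ : Matrix (Fin (n+1)) (Fin (n+1)) ℂ, ρ.PosSemidef →
      (l.foldl (fun ρ σ => ∑ i : Fin (k σ), E σ i * ρ * (E σ i).conjTranspose) ρ).PosSemidef ∧
      (l.foldl (fun ρ σ => ∑ i : Fin (k σ), E σ i * ρ * (E σ i).conjTranspose) ρ).trace
        = ρ.trace := by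
  induction l with
  | nil => intro ρ hρ; exact ⟨hρ, rfl⟩
  | cons σ l ih =>
      intro ρ hρ
      obtain ⟨h1, h2⟩ := step_psd_trace (E σ) (hk σ) ρ hρ
      obtain ⟨h3, h4⟩ := ih _ h1
      exact ⟨h3, h4.trans h2⟩

lemma qRun_psd_trace {α : Type} {n : ℕ} {k : ESym α → ℕ}
    (E : ∀ σ : ESym α, Fin (k σ) → Matrix (Fin (n+1)) (Fin (n+1)) ℂ)
    (hk : ∀ σ : ESym α, ∑ i : Fin (k σ), (E σ i).conjTranspose * E σ i = 1)
    (w : List α) : (qRun E w).PosSemidef ∧ (qRun E w).trace = 1 := by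
  have init : (Matrix.single (0 : Fin (n+1)) 0 (1:ℂ)).PosSemidef ∧
      (Matrix.single (0 : Fin (n+1)) 0 (1:ℂ)).trace = 1 := by
    constructor
    · rw [Matrix.posSemidef_iff_dotProduct_mulVec]
      constructor
      · ext i j
        simp only [Matrix.conjTranspose_apply, Matrix.single, Matrix.of_apply,
          apply_ite star, star_one, star_zero, and_comm]
      · intro x
        have h : dotProduct (star x)
            ((Matrix.single (0 : Fin (n+1)) 0 (1:ℂ)).mulVec x)
            = star (x 0) * x 0 := by
          simp [dotProduct, Matrix.mulVec, Matrix.single, ite_and, mul_ite,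
            Finset.mul_sum, Finset.sum_ite_eq, Finset.sum_ite_eq']
        rw [h]
        exact star_mul_self_nonneg _
    · have hd : ∀ i : Fin (n+1),
          Matrix.single (0 : Fin (n+1)) 0 (1:ℂ) i i = if i = 0 then 1 else 0 := by
        intro i
        simp only [Matrix.single, Matrix.of_apply, and_self]
        by_cases h : i = 0 <;> simp [h, eq_comm]
      simp only [Matrix.trace]
      simp [Matrix.diag, hd]
  have key := foldl_psd_trace E hk (ESym.cent :: (w.map ESym.letter ++ [ESym.dollar]))
    (Matrix.single (0 : Fin (n+1)) 0 (1:ℂ)) init.1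
  unfold qRun
  exact ⟨key.1, key.2.trans init.2⟩

lemma psd_diag_re_nonneg {n : ℕ} {ρ : Matrix (Fin n) (Fin n) ℂ} (hρ : ρ.PosSemidef)
    (i : Fin n) : 0 ≤ (ρ i i).re := by
  have := (Matrix.posSemidef_iff_dotProduct_mulVec.1 hρ).2 (Pi.single i 1)
  rw [Complex.le_def] at this
  convert this.1 using 2
  all_goals simp [dotProduct, Matrix.mulVec, Pi.single_apply, Finset.sum_ite_eq']

lemma trace_projM_mul {n : ℕ} (S : Finset (Fin (n+1))) (ρ : Matrix (Fin (n+1)) (Fin (n+1)) ℂ) :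
    (projM S * ρ).trace = ∑ i ∈ S, ρ i i := by
  simp [Matrix.trace, Matrix.diag, projM, Matrix.diagonal_mul, ite_mul,
    Finset.sum_ite_mem, Finset.univ_inter]

lemma probs_bounds {α : Type} {n : ℕ} {k : ESym α → ℕ}
    (E : ∀ σ : ESym α, Fin (k σ) → Matrix (Fin (n+1)) (Fin (n+1)) ℂ)
    (hk : ∀ σ : ESym α, ∑ i : Fin (k σ), (E σ i).conjTranspose * E σ i = 1)
    (S T : Finset (Fin (n+1))) (hST : Disjoint S T) (w : List α) :
    0 ≤ ((projM S * qRun E w).trace).re ∧ 0 ≤ ((projM T * qRun E w).trace).re ∧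
      ((projM S * qRun E w).trace).re + ((projM T * qRun E w).trace).re ≤ 1 := by
  obtain ⟨hpsd, htr⟩ := qRun_psd_trace E hk w
  set ρ := qRun E w
  have hdiag : ∀ i, 0 ≤ (ρ i i).re := psd_diag_re_nonneg hpsd
  have hS : ((projM S * ρ).trace).re = ∑ i ∈ S, (ρ i i).re := by
    rw [trace_projM_mul, Complex.re_sum]
  have hT : ((projM T * ρ).trace).re = ∑ i ∈ T, (ρ i i).re := by
    rw [trace_projM_mul, Complex.re_sum]
  refine ⟨hS ▸ Finset.sum_nonneg fun i _ => hdiag i,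
    hT ▸ Finset.sum_nonneg fun i _ => hdiag i, ?_⟩
  rw [hS, hT, ← Finset.sum_union hST]
  have : (1 : ℝ) = ∑ i : Fin (n+1), (ρ i i).re := by
    have := congrArg Complex.re htr
    rw [Matrix.trace] at this
    simpa [Complex.re_sum, Matrix.diag] using this.symm
  rw [this]
  exact Finset.sum_le_sum_of_subset_of_nonneg (Finset.subset_univ _) fun i _ _ => hdiag i

lemma myGeomSumEq {p q : ℝ} (hp : 0 ≤ p) (hq : 0 ≤ q) (hle : p + q ≤ 1) (hpos : 0 < p + q) :
    ∑' i : ℕ, (1 - p - q) ^ i * p = p / (p + q) := by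
  have hr0 : 0 ≤ 1 - p - q := by linarith
  have hr1 : 1 - p - q < 1 := by linarith
  rw [tsum_mul_right, tsum_geometric_of_lt_one hr0 hr1]
  rw [show 1 - (1 - p - q) = p + q by ring]
  rw [div_eq_inv_mul]

end Aux

lemma restart_fa_eq {α : Type} (M : RestartQFA α) (w : List α) :
    M.fa w = M.pacc w / (M.pacc w + M.prej w) := by
  obtain ⟨h1, h2, h3⟩ := probs_bounds M.E M.kraus M.Qa M.Qr M.disj w
  exact myGeomSumEq h1 h2 h3 (M.haltPos w)

/-- A language is recognized with error bound `ε` by some RT-QFA↻ iff it is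
recognized with error bound `ε` by some RT-PostQFA; in particular the class of
languages recognized by RT-QFA↻s with bounded error equals `PostQAL`. -/
theorem restartQFA_iff_postQFA (α : Type) [Fintype α] :
    (∀ (L : Set (List α)) (ε : ℝ), 0 ≤ ε → ε < 1 / 2 →
      ((∃ M : RestartQFA α, M.Recognizes L ε) ↔ (∃ M : PostQFA α, M.Recognizes L ε))) ∧
      {L : Set (List α) | RestartQAL L} = {L : Set (List α) | PostQAL L} := by
  have key : ∀ (L : Set (List α)) (ε : ℝ),
      ((∃ M : RestartQFA α, M.Recognizes L ε) ↔ (∃ M : PostQFA α, M.Recognizes L ε)) := by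
    intro L ε
    constructor
    · rintro ⟨M, hM⟩
      refine ⟨⟨M.n, M.k, M.E, M.kraus, M.Qa, M.Qr, M.disj, M.haltPos⟩, fun w => ?_⟩
      have hfa : (⟨M.n, M.k, M.E, M.kraus, M.Qa, M.Qr, M.disj, M.haltPos⟩ : PostQFA α).fa w
          = M.fa w := by
        rw [restart_fa_eq M w]; rfl
      rw [hfa]
      exact hM w
    · rintro ⟨M, hM⟩
      refine ⟨⟨M.n, M.k, M.E, M.kraus, M.Qpa, M.Qpr, M.disj, M.postPos⟩, fun w => ?_⟩
      have hfa : (⟨M.n, M.k, M.E, M.kraus, M.Qpa, M.Qpr, M.disj, M.postPos⟩ : RestartQFA α).fa w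
          = M.fa w := by
        rw [restart_fa_eq]; rfl
      rw [hfa]
      exact hM w
  refine ⟨fun L ε _ _ => key L ε, ?_⟩
  ext L
  simp only [Set.mem_setOf_eq, RestartQAL, PostQAL]
  constructor
  · rintro ⟨M, ε, h0, h1, h2⟩
    obtain ⟨N, hN⟩ := (key L ε).1 ⟨M, h2⟩
    exact ⟨N, ε, h0, h1, hN⟩
  · rintro ⟨M, ε, h0, h1, h2⟩
    obtain ⟨N, hN⟩ := (key L ε).2 ⟨M, h2⟩
    exact ⟨N, ε, h0, h1, hN⟩
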